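/- Let p = 2k+1 be an odd prime, let F = 𝔽_{p²} be the field with p² elements, and let b₀ ∈ F be a normal basis element, i.e. b₀ and b₀^p are linearly independent over 𝔽_p. Let φ : R → F be the ℤ-linear map from the integral group ring R = ℤ[G] of the Klein four-group G determined on the group basis by φ(1) = φ(a) = b₀ and φ(b) = φ(a·b) = b₀^p (so the first generator a acts trivially on F and the second generator b acts as the Frobenius x ↦ x^p, and φ sends a group element g to g·b₀). Then φ is surjective and its kernel is exactly the ideal Ideal.span {(p : R), a − 1} = Ideal.span {(k+1)·1 + k·a}; in other words 0 → ℤ[G] →(·u) ℤ[G] →φ 𝔽_{p²} → 0 is a short exact sequence, where u = (k+1)·1 + k·a. -/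

import Mathlib

private abbrev Kl : Type := Multiplicative (ZMod 2 × ZMod 2)
private abbrev RR : Type := MonoidAlgebra ℤ Kl
private abbrev gg (i j : ZMod 2) : Kl := Multiplicative.ofAdd (i, j)
private noncomputable abbrev AA : RR := MonoidAlgebra.of ℤ Kl (gg 1 0)
private noncomputable abbrev BB : RR := MonoidAlgebra.of ℤ Kl (gg 0 1)

private instance : CoeFun RR (fun _ => Kl → ℤ) := ⟨fun x => x.coeff⟩

private lemma single_eq (g : Kl) (c : ℤ) :
    MonoidAlgebra.single g c = (c : RR) * MonoidAlgebra.of ℤ Kl g := by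
  rw [← zsmul_eq_mul]
  simp [MonoidAlgebra.of_apply, MonoidAlgebra.smul_single']

private lemma AA_sq : AA * AA = 1 := by
  rw [← map_mul, show gg 1 0 * gg 1 0 = 1 by decide, map_one]

private lemma of_one : MonoidAlgebra.of ℤ Kl (gg 0 0) = 1 := by
  rw [show gg 0 0 = 1 by decide, map_one]

private lemma of_ab : AA * BB = MonoidAlgebra.of ℤ Kl (gg 1 1) := by
  rw [← map_mul, show gg 1 0 * gg 0 1 = gg 1 1 by decide]

private lemma decompR (x : RR) :
    x = ((x (gg 0 0) : ℤ) : RR) + ((x (gg 1 0) : ℤ) : RR) * AA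
      + ((x (gg 0 1) : ℤ) : RR) * BB + ((x (gg 1 1) : ℤ) : RR) * (AA * BB) := by
  have hsum : ∀ f : Kl → ℤ, (∑ g : Kl, MonoidAlgebra.single g (f g) : RR) =
      MonoidAlgebra.single (gg 0 0) (f (gg 0 0)) + MonoidAlgebra.single (gg 1 0) (f (gg 1 0))
      + MonoidAlgebra.single (gg 0 1) (f (gg 0 1)) + MonoidAlgebra.single (gg 1 1) (f (gg 1 1)) := by
    intro f
    have huniv : (Finset.univ : Finset Kl) = {gg 0 0, gg 1 0, gg 0 1, gg 1 1} := by decide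
    rw [huniv, Finset.sum_insert (by decide), Finset.sum_insert (by decide),
      Finset.sum_insert (by decide), Finset.sum_singleton]
    ring
  have hx : x = ∑ g : Kl, MonoidAlgebra.single g (x g) := by
    apply MonoidAlgebra.coeff_injective
    rw [MonoidAlgebra.coeff_sum]
    simp only [MonoidAlgebra.coeff_single]
    rw [← Finsupp.sum_fintype]
    · exact (Finsupp.sum_single x.coeff).symm
    · intro g; exact Finsupp.single_zero g
  calc x = _ := hx.trans (hsum _)
    _ = _ := by rw [single_eq, single_eq, single_eq, single_eq, of_one, mul_one, of_ab]

set_option maxHeartbeats 1000000 in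
/-- Let `p = 2k+1` be an odd prime, `F = 𝔽_{p²}` and `b₀ ∈ F` a normal basis element
(`b₀, b₀^p` linearly independent over `𝔽_p`). Let `φ : ℤ[G] → F` be the ℤ-linear map from
the integral group ring of the Klein four-group `G` sending a group element `g` to `b₀` if
`g` lies in the (inertia) subgroup generated by the first generator `a`, and to `b₀^p`
otherwise (so `a` acts trivially and the second generator `b` acts as Frobenius).
Then `φ` is surjective with kernel exactly `⟨p, a - 1⟩ = ⟨(k+1)·1 + k·a⟩`; i.e.
`0 → ℤ[G] →(·u) ℤ[G] →φ 𝔽_{p²} → 0` is a short exact sequence with `u = (k+1)·1 + k·a`. -/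
theorem group_ring_resolution_of_residue_field
    (p k : ℕ) (hp : p.Prime) (hpk : p = 2 * k + 1) :
    letI : Fact p.Prime := ⟨hp⟩
    letI G := Multiplicative (ZMod 2 × ZMod 2)
    letI R := MonoidAlgebra ℤ G
    letI a : R := MonoidAlgebra.of ℤ G (Multiplicative.ofAdd ((1 : ZMod 2), (0 : ZMod 2)))
    ∀ b₀ : GaloisField p 2, LinearIndependent (ZMod p) ![b₀, b₀ ^ p] →
      ∀ φ : R →ₗ[ℤ] GaloisField p 2,
        (∀ g : G, φ (MonoidAlgebra.of ℤ G g) =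
          if (Multiplicative.toAdd g).2 = 0 then b₀ else b₀ ^ p) →
        Function.Surjective φ ∧
          (∀ x : R, φ x = 0 ↔ x ∈ Ideal.span {(p : R), a - 1}) ∧
          Ideal.span {(p : R), a - 1} = Ideal.span {((k : R) + 1) + (k : R) * a} := by
  have : Fact p.Prime := ⟨hp⟩
  intro b₀ hb φ hφ
  -- values of φ on the group basis
  have hφ1 : φ 1 = b₀ := by
    rw [← of_one, hφ]
    norm_num [gg]
  have hφA : φ AA = b₀ := by
    rw [hφ]; norm_num [gg]
  have hφB : φ BB = b₀ ^ p := by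
    rw [hφ]
    rw [if_neg (by decide)]
  have hφAB : φ (AA * BB) = b₀ ^ p := by
    rw [of_ab, hφ]
    rw [if_neg (by decide)]
  -- evaluation of φ on a ring-form combination
  have hφeval : ∀ c1 c2 c3 c4 : ℤ,
      φ ((c1 : RR) + (c2 : RR) * AA + (c3 : RR) * BB + (c4 : RR) * (AA * BB))
        = (c1 + c2) • b₀ + (c3 + c4) • b₀ ^ p := by
    intro c1 c2 c3 c4
    have h1 : (c1 : RR) = c1 • (1 : RR) := by rw [zsmul_eq_mul, mul_one]
    rw [h1, show (c2 : RR) * AA = c2 • AA from (zsmul_eq_mul _ _).symm,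
      show (c3 : RR) * BB = c3 • BB from (zsmul_eq_mul _ _).symm,
      show (c4 : RR) * (AA * BB) = c4 • (AA * BB) from (zsmul_eq_mul _ _).symm,
      map_add, map_add, map_add, map_smul, map_smul, map_smul, map_smul,
      hφ1, hφA, hφB, hφAB, add_smul, add_smul]
    abel
  have hmaster : ∀ x : RR, φ x = (x (gg 0 0) + x (gg 1 0)) • b₀
      + (x (gg 0 1) + x (gg 1 1)) • b₀ ^ p := by
    intro x
    conv_lhs => rw [decompR x]
    rw [hφeval]
  -- kernel criterion on coefficients
  have hkey : ∀ m n : ℤ, (m • b₀ + n • b₀ ^ p = 0) ↔ ((p : ℤ) ∣ m ∧ (p : ℤ) ∣ n) := by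
    intro m n
    rw [← Int.cast_smul_eq_zsmul (ZMod p) m b₀, ← Int.cast_smul_eq_zsmul (ZMod p) n (b₀ ^ p)]
    constructor
    · intro h
      obtain ⟨h1, h2⟩ := (LinearIndependent.pair_iff.mp hb) _ _ h
      exact ⟨(ZMod.intCast_zmod_eq_zero_iff_dvd m p).mp h1,
        (ZMod.intCast_zmod_eq_zero_iff_dvd n p).mp h2⟩
    · rintro ⟨h1, h2⟩
      rw [(ZMod.intCast_zmod_eq_zero_iff_dvd m p).mpr h1,
        (ZMod.intCast_zmod_eq_zero_iff_dvd n p).mpr h2]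
      simp
  refine ⟨?_, ?_, ?_⟩
  · -- surjectivity
    intro y
    have hspan : Submodule.span (ZMod p) (Set.range ![b₀, b₀ ^ p]) = ⊤ :=
      hb.span_eq_top_of_card_eq_finrank
        (by rw [Fintype.card_fin, GaloisField.finrank p (by norm_num : (2:ℕ) ≠ 0)])
    have hy : y ∈ Submodule.span (ZMod p) ({b₀, b₀ ^ p} : Set (GaloisField p 2)) := by
      rw [show ({b₀, b₀ ^ p} : Set (GaloisField p 2)) = Set.range ![b₀, b₀ ^ p] from
        (Matrix.range_cons_cons_empty b₀ (b₀ ^ p) ![]).symm, hspan]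
      trivial
    obtain ⟨c, d, hcd⟩ := Submodule.mem_span_pair.mp hy
    obtain ⟨m, rfl⟩ := ZMod.intCast_surjective c
    obtain ⟨n, rfl⟩ := ZMod.intCast_surjective d
    refine ⟨(m : RR) + ((0 : ℤ) : RR) * AA + (n : RR) * BB + ((0 : ℤ) : RR) * (AA * BB), ?_⟩
    rw [hφeval m 0 n 0, add_zero, add_zero,
      ← Int.cast_smul_eq_zsmul (ZMod p) m b₀, ← Int.cast_smul_eq_zsmul (ZMod p) n (b₀ ^ p)]
    exact hcd
  · -- kernel
    intro x
    constructor
    · intro h0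
      rw [hmaster x, hkey] at h0
      obtain ⟨⟨m1, hm1⟩, ⟨m2, hm2⟩⟩ := h0
      rw [Ideal.mem_span_pair]
      refine ⟨(m1 : RR) + (m2 : RR) * BB,
        ((x (gg 1 0) : ℤ) : RR) + ((x (gg 1 1) : ℤ) : RR) * BB, ?_⟩
      have hd := decompR x
      have hm1' : ((x (gg 0 0) : ℤ) : RR) + ((x (gg 1 0) : ℤ) : RR) = (p : RR) * (m1 : RR) := by
        have := congrArg (fun z : ℤ => (z : RR)) hm1
        push_cast at this
        exact this
      have hm2' : ((x (gg 0 1) : ℤ) : RR) + ((x (gg 1 1) : ℤ) : RR) = (p : RR) * (m2 : RR) := by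
        have := congrArg (fun z : ℤ => (z : RR)) hm2
        push_cast at this
        exact this
      linear_combination -hd - hm1' - BB * hm2'
    · intro hmem
      obtain ⟨u, v, huv⟩ := Ideal.mem_span_pair.mp hmem
      have hpz : ∀ w : RR, φ (w * (p : RR)) = 0 := by
        intro w
        have hw : w * (p : RR) = (p : ℕ) • w := by rw [nsmul_eq_mul]; ring
        rw [hw, map_nsmul, nsmul_eq_mul, show ((p : ℕ) : GaloisField p 2) = 0 from
          CharP.cast_eq_zero _ p, zero_mul]
      have hA : ∀ w : RR, φ (w * AA) = φ w := by
        intro w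
        have h := decompR w
        have hAA := AA_sq
        have hwa : w * AA = ((w (gg 1 0) : ℤ) : RR) + ((w (gg 0 0) : ℤ) : RR) * AA
            + ((w (gg 1 1) : ℤ) : RR) * BB + ((w (gg 0 1) : ℤ) : RR) * (AA * BB) := by
          linear_combination AA * h + (((w (gg 1 0) : ℤ) : RR)
            + ((w (gg 1 1) : ℤ) : RR) * BB) * hAA
        rw [hwa, hφeval, hmaster w, add_comm (w (gg 1 0)) (w (gg 0 0)),
          add_comm (w (gg 1 1)) (w (gg 0 1))]
      calc φ x = φ (u * (p : RR)) + (φ (v * AA) - φ v) := by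
            rw [← map_sub, ← map_add, ← huv]; ring_nf
        _ = 0 := by rw [hpz, hA, sub_self, add_zero]
  · -- span equality
    apply le_antisymm
    · rw [Ideal.span_le]
      rintro z hz
      simp only [Set.mem_insert_iff, Set.mem_singleton_iff] at hz
      have hAA := AA_sq
      rcases hz with rfl | rfl
      · rw [SetLike.mem_coe, Ideal.mem_span_singleton']
        refine ⟨(k : RR) + 1 - (k : RR) * AA, ?_⟩
        rw [hpk]; push_cast
        linear_combination (-(k : RR) ^ 2) * hAA
      · rw [SetLike.mem_coe, Ideal.mem_span_singleton']
        exact ⟨AA - 1, by linear_combination (k : RR) * hAA⟩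
    · rw [Ideal.span_le]
      rintro z hz
      simp only [Set.mem_singleton_iff] at hz
      subst hz
      rw [SetLike.mem_coe, Ideal.mem_span_pair]
      exact ⟨1, (k : RR), by rw [hpk]; push_cast; ring⟩
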